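/- arXiv:2102.06627 — 4 statements merged into one kernel-verified Lean document; each statement's English description precedes it below -/
import Mathlib

section
/- Let d_m, d_ρ, d, r be positive integers. Let Γ_pr ∈ ℝ^{d_m×d_m} be symmetric positive definite, P ∈ ℝ^{d_ρ×d_m} with Σ_pr := P Γ_pr Pᵀ invertible, and F_d ∈ ℝ^{d×d_m}. Set P_† := Γ_pr Pᵀ Σ_pr^{-1}, H_d^ρ := F_d Γ_pr Pᵀ Σ_pr^{-1} P Γ_pr F_dᵀ, H_d := F_d Γ_pr F_dᵀ, ΔH_d := H_d − H_d^ρ. Let Γ_n^d ∈ ℝ^{d×d} be diagonal with positive diagonal entries, and let W ∈ ℝ^{r×d} be a matrix each of whose rows is a standard basis vector of ℝ^d, with distinct rows (so W Wᵀ = I_r). Define Γ_η(W) := W(Γ_n^d + ΔH_d)Wᵀ, and assume Γ_η(W) is invertible. Then for any L ∈ ℝ^{r×r} with L Lᵀ = Γ_η(W)^{-1}, one has (1/2)·log det(I_{d_ρ} + Σ_pr^{1/2} (W F_d P_†)ᵀ Γ_η(W)^{-1} (W F_d P_†) Σ_pr^{1/2}) = (1/2)·log det(I_r + Lᵀ W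 H_d^ρ Wᵀ L), where Σ_pr^{1/2} denotes the positive semidefinite square root of Σ_pr. -/
open Matrix

/-- Theorem 3.1 of the paper: the goal-oriented expected information gain admits
an offline-online computable form. -/
theorem stmt0 (d_m d_ρ d r : ℕ) (hdm : 0 < d_m) (hdρ : 0 < d_ρ) (hd : 0 < d) (hr : 0 < r)
    -- prior covariance
    (Γpr : Matrix (Fin d_m) (Fin d_m) ℝ) (hΓpr : Γpr.PosDef)
    -- goal operator and goal prior covariance
    (P : Matrix (Fin d_ρ) (Fin d_m) ℝ)
    (Spr : Matrix (Fin d_ρ) (Fin d_ρ) ℝ) (hSprdef : Spr = P * Γpr * Pᵀ)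
    (hSprinv : IsUnit Spr.det)
    -- full parameter-to-observable map
    (Fd : Matrix (Fin d) (Fin d_m) ℝ)
    -- P_† := Γ_pr Pᵀ Sigma_pr⁻¹
    (Pd : Matrix (Fin d_m) (Fin d_ρ) ℝ) (hPd : Pd = Γpr * Pᵀ * Spr⁻¹)
    -- H_d^ρ := F_d Γ_pr Pᵀ Sigma_pr⁻¹ P Γ_pr F_dᵀ,  H_d := F_d Γ_pr F_dᵀ,  ΔH_d := H_d − H_d^ρ
    (Hρ : Matrix (Fin d) (Fin d) ℝ) (hHρ : Hρ = Fd * Γpr * Pᵀ * Spr⁻¹ * P * Γpr * Fdᵀ)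
    (Hd : Matrix (Fin d) (Fin d) ℝ) (hHd : Hd = Fd * Γpr * Fdᵀ)
    (ΔH : Matrix (Fin d) (Fin d) ℝ) (hΔH : ΔH = Hd - Hρ)
    -- noise covariance: diagonal with positive diagonal entries
    (σsq : Fin d → ℝ) (hσ : ∀ i, 0 < σsq i)
    (Γn : Matrix (Fin d) (Fin d) ℝ) (hΓn : Γn = Matrix.diagonal σsq)
    -- design matrix: each row a standard basis vector of ℝ^d, rows distinct
    (W : Matrix (Fin r) (Fin d) ℝ) (f : Fin r → Fin d) (hf : Function.Injective f)
    (hW : W = Matrix.of fun i j => if j = f i then (1 : ℝ) else 0)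
    -- Γ_η(W) := W (Γ_n^d + ΔH_d) Wᵀ, assumed invertible
    (Γη : Matrix (Fin r) (Fin r) ℝ) (hΓη : Γη = W * (Γn + ΔH) * Wᵀ)
    (hΓηinv : IsUnit Γη.det)
    -- S is the positive semidefinite square root of Sigma_pr
    (Ssqrt : Matrix (Fin d_ρ) (Fin d_ρ) ℝ) (hSpsd : Ssqrt.PosSemidef) (hSS : Ssqrt * Ssqrt = Spr)
    -- Cholesky-type factor: L Lᵀ = Γ_η(W)⁻¹
    (L : Matrix (Fin r) (Fin r) ℝ) (hL : L * Lᵀ = Γη⁻¹) :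
    (1 / 2) * Real.log (1 + Ssqrt * (W * Fd * Pd)ᵀ * Γη⁻¹ * (W * Fd * Pd) * Ssqrt).det =
      (1 / 2) * Real.log (1 + Lᵀ * W * Hρ * Wᵀ * L).det := by
  have hΓprT : Γprᵀ = Γpr := by
    have := hΓpr.isHermitian
    simpa [Matrix.IsHermitian, Matrix.conjTranspose_eq_transpose_of_trivial] using this
  have hSprT : Sprᵀ = Spr := by
    rw [hSprdef]
    simp [Matrix.transpose_mul, hΓprT, Matrix.mul_assoc]
  have hSinvT : Spr⁻¹ᵀ = Spr⁻¹ := by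
    rw [Matrix.transpose_nonsing_inv, hSprT]
  have hST : Ssqrtᵀ = Ssqrt := by
    have := hSpsd.isHermitian
    simpa [Matrix.IsHermitian, Matrix.conjTranspose_eq_transpose_of_trivial] using this
  have hinv : Spr⁻¹ * Spr = 1 := Matrix.nonsing_inv_mul Spr hSprinv
  set A := W * Fd * Pd with hA
  set M := Lᵀ * A * Ssqrt with hM
  have cancel : ∀ X : Matrix (Fin d_ρ) (Fin r) ℝ, Spr⁻¹ * (Spr * X) = X := fun X => by
    rw [← Matrix.mul_assoc, hinv, Matrix.one_mul]
  have hSS' : ∀ X : Matrix (Fin d_ρ) (Fin r) ℝ, Ssqrt * (Ssqrt * X) = Spr * X := fun X => by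
    rw [← Matrix.mul_assoc, hSS]
  have hLHS : 1 + Ssqrt * Aᵀ * Γη⁻¹ * A * Ssqrt = 1 + Mᵀ * M := by
    rw [← hL, hM]
    simp only [Matrix.transpose_mul, Matrix.transpose_transpose, hST, Matrix.mul_assoc]
  have hRHS : 1 + Lᵀ * W * Hρ * Wᵀ * L = 1 + M * Mᵀ := by
    rw [hM, hHρ, hA, hPd]
    simp only [Matrix.transpose_mul, Matrix.transpose_transpose, hSinvT, hΓprT, hST,
      Matrix.mul_assoc, hSS', cancel]
  rw [hLHS, hRHS, Matrix.det_one_add_mul_comm]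
end

section
/- Let A, B ∈ ℂ^{n×n} be Hermitian positive semidefinite matrices such that A − B is also Hermitian positive semidefinite. Then 0 ≤ log det(I + A) − log det(I + B) ≤ log det(I + A − B), where all three determinants are positive real numbers. -/
open Matrix
open scoped ComplexOrder
open scoped MatrixOrder

variable {n : ℕ}


/-- det(1+N) is a real number ≥ 1 for PSD N. -/
lemma det_one_add_psd {N : Matrix (Fin n) (Fin n) ℂ} (hN : N.PosSemidef) :
    ∃ r : ℝ, 1 ≤ r ∧ (1 + N).det = (r : ℂ) := by
  have h := hN.1.spectral_theorem
  set U : Matrix (Fin n) (Fin n) ℂ := (hN.1.eigenvectorUnitary : Matrix (Fin n) (Fin n) ℂ)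
  have hU1 : U * star U = 1 := (Matrix.mem_unitaryGroup_iff).mp hN.1.eigenvectorUnitary.2
  have h1 : (1 : Matrix (Fin n) (Fin n) ℂ) + N
      = U * (1 + diagonal (RCLike.ofReal ∘ hN.1.eigenvalues)) * star U := by
    rw [mul_add, add_mul, mul_one, hU1]
    exact congrArg (1 + ·) h
  refine ⟨∏ i, (1 + hN.1.eigenvalues i), ?_, ?_⟩
  · have := Finset.prod_le_prod (f := fun _ : Fin n => (1:ℝ))
      (g := fun i => 1 + hN.1.eigenvalues i) (s := Finset.univ)
      (fun i _ => zero_le_one) (fun i _ => le_add_of_nonneg_right (hN.eigenvalues_nonneg i))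
    simpa using this
  · rw [h1, det_mul, det_mul, mul_comm (U.det), mul_assoc, ← det_mul, hU1, det_one, mul_one]
    have : (1 : Matrix (Fin n) (Fin n) ℂ) + diagonal (RCLike.ofReal ∘ hN.1.eigenvalues)
        = diagonal (fun i => (1 : ℂ) + hN.1.eigenvalues i) := by
      rw [← diagonal_one, diagonal_add]
      rfl
    rw [this, det_diagonal]
    push_cast
    rfl

/-- det is monotone: for PD `M` and PSD `C`, `det (M + C) = det M * r` with `r ≥ 1`. -/
lemma det_add_psd {M C : Matrix (Fin n) (Fin n) ℂ} (hM : M.PosDef) (hC : C.PosSemidef) :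
    ∃ r : ℝ, 1 ≤ r ∧ (M + C).det = M.det * (r : ℂ) := by
  set S := CFC.sqrt M with hS
  have hSH : S.IsHermitian := (Matrix.nonneg_iff_posSemidef.mp (CFC.sqrt_nonneg M)).1
  have hSS : S * S = M := CFC.sqrt_mul_sqrt_self M hM.posSemidef.nonneg
  have hdet : S.det * S.det = M.det := by rw [← det_mul, hSS]
  have hdS : IsUnit S.det := by
    refine isUnit_iff_ne_zero.2 fun h => ?_
    exact hM.det_pos.ne' (by rw [← hdet, h, mul_zero])
  have hinv1 : S * S⁻¹ = 1 := mul_nonsing_inv S hdS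
  have hinv2 : S⁻¹ * S = 1 := nonsing_inv_mul S hdS
  have hKpsd : (S⁻¹ * C * S⁻¹).PosSemidef := by
    have := hC.conjTranspose_mul_mul_same (B := S⁻¹)
    rwa [conjTranspose_nonsing_inv, hSH.eq] at this
  obtain ⟨r, hr1, hr2⟩ := det_one_add_psd hKpsd
  refine ⟨r, hr1, ?_⟩
  have h1 : M + C = S * (1 + S⁻¹ * C * S⁻¹) * S := by
    rw [mul_add, add_mul, mul_one, hSS]
    congr 1
    symm
    calc S * (S⁻¹ * C * S⁻¹) * S = (S * S⁻¹) * C * (S⁻¹ * S) := by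
          simp only [Matrix.mul_assoc]
        _ = C := by rw [hinv1, hinv2, one_mul, mul_one]
  rw [h1, det_mul, det_mul, hr2, mul_right_comm, mul_comm S.det, mul_assoc, ← hdet]
  ring

/-- For PSD `B`, `1 - (1+B)⁻¹` is PSD. -/
lemma one_sub_inv_psd {B : Matrix (Fin n) (Fin n) ℂ} (hB : B.PosSemidef) :
    ((1 : Matrix (Fin n) (Fin n) ℂ) - (1 + B)⁻¹).PosSemidef := by
  have h := hB.1.spectral_theorem
  set U : Matrix (Fin n) (Fin n) ℂ := (hB.1.eigenvectorUnitary : Matrix (Fin n) (Fin n) ℂ)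
  have hU1 : U * star U = 1 := (Matrix.mem_unitaryGroup_iff).mp hB.1.eigenvectorUnitary.2
  have hU2 : star U * U = 1 := (Matrix.mem_unitaryGroup_iff').mp hB.1.eigenvectorUnitary.2
  set lam := hB.1.eigenvalues
  have hpos : ∀ i, (0:ℝ) < 1 + lam i := fun i => by linarith [hB.eigenvalues_nonneg i]
  have h1 : (1 : Matrix (Fin n) (Fin n) ℂ) + B
      = U * diagonal (fun i => (1 + lam i : ℝ) : Fin n → ℂ) * star U := by
    have : (1 : Matrix (Fin n) (Fin n) ℂ) + B
        = U * (1 + diagonal (RCLike.ofReal ∘ lam)) * star U := by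
      rw [mul_add, add_mul, mul_one, hU1]
      exact congrArg (1 + ·) h
    rw [this, ← diagonal_one, diagonal_add]
    congr 2
    funext i
    simp
  have hinv : ((1 : Matrix (Fin n) (Fin n) ℂ) + B)⁻¹
      = U * diagonal (fun i => (((1 + lam i : ℝ))⁻¹ : ℂ)) * star U := by
    apply inv_eq_right_inv
    rw [h1]
    calc U * diagonal (fun i => ((1 + lam i : ℝ) : ℂ)) * star U *
          (U * diagonal (fun i => (((1 + lam i : ℝ))⁻¹ : ℂ)) * star U)
        = U * diagonal (fun i => ((1 + lam i : ℝ) : ℂ)) * (star U * U) *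
          diagonal (fun i => (((1 + lam i : ℝ))⁻¹ : ℂ)) * star U := by
          simp only [Matrix.mul_assoc]
      _ = 1 := by
          rw [hU2, mul_one, Matrix.mul_assoc U, diagonal_mul_diagonal]
          have : (fun i => ((1 + lam i : ℝ) : ℂ) * (((1 + lam i : ℝ))⁻¹ : ℂ))
              = fun _ => (1 : ℂ) := by
            funext i
            rw [mul_inv_cancel₀]
            exact_mod_cast (hpos i).ne'
          rw [this, diagonal_one, mul_one, hU1]
  have h2 : (1 : Matrix (Fin n) (Fin n) ℂ) - (1 + B)⁻¹
      = U * diagonal (fun i => ((1 - (1 + lam i)⁻¹ : ℝ) : ℂ)) * star U := by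
    rw [hinv]
    have hone : (1 : Matrix (Fin n) (Fin n) ℂ) = U * 1 * star U := by rw [mul_one, hU1]
    rw [hone]
    rw [← Matrix.sub_mul, ← Matrix.mul_sub, ← diagonal_one, diagonal_sub]
    congr 2
    funext i
    push_cast
    ring
  rw [h2, Matrix.star_eq_conjTranspose U]
  apply Matrix.PosSemidef.mul_mul_conjTranspose_same
  apply Matrix.PosSemidef.diagonal
  intro i
  show (0:ℂ) ≤ _
  simp only []
  rw [Complex.zero_le_real]
  have h3 : (1 + lam i)⁻¹ ≤ 1 := by
    rw [inv_le_one_iff₀]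
    right
    linarith [hB.eigenvalues_nonneg i]
  linarith

/-- Subadditivity core: for PSD `B`, `C`:
`det(1+B+C) = det(1+B) * det(1+G)` with `G` PSD and `C - G` PSD. -/
lemma det_one_add_add_psd {B C : Matrix (Fin n) (Fin n) ℂ}
    (hB : B.PosSemidef) (hC : C.PosSemidef) :
    ∃ G : Matrix (Fin n) (Fin n) ℂ, G.PosSemidef ∧ (C - G).PosSemidef ∧
      ((1 : Matrix (Fin n) (Fin n) ℂ) + B + C).det = (1 + B).det * (1 + G).det := by
  have hP : ((1 : Matrix (Fin n) (Fin n) ℂ) + B).PosDef :=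
    Matrix.PosDef.add_posSemidef Matrix.PosDef.one hB
  set P : Matrix (Fin n) (Fin n) ℂ := 1 + B with hPdef
  set S := CFC.sqrt P with hSdef
  have hSH : S.IsHermitian := (Matrix.nonneg_iff_posSemidef.mp (CFC.sqrt_nonneg P)).1
  have hSS : S * S = P := CFC.sqrt_mul_sqrt_self P hP.posSemidef.nonneg
  have hdetS : S.det * S.det = P.det := by rw [← det_mul, hSS]
  have hdS : IsUnit S.det := by
    refine isUnit_iff_ne_zero.2 fun h => ?_
    exact hP.det_pos.ne' (by rw [← hdetS, h, mul_zero])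
  have hinv1 : S * S⁻¹ = 1 := mul_nonsing_inv S hdS
  have hinv2 : S⁻¹ * S = 1 := nonsing_inv_mul S hdS
  set R := CFC.sqrt C with hRdef
  have hRH : R.IsHermitian := (Matrix.nonneg_iff_posSemidef.mp (CFC.sqrt_nonneg C)).1
  have hRR : R * R = C := CFC.sqrt_mul_sqrt_self C hC.nonneg
  set G : Matrix (Fin n) (Fin n) ℂ := R * P⁻¹ * R with hGdef
  have hPinv : S⁻¹ * S⁻¹ = P⁻¹ := by rw [← Matrix.mul_inv_rev, hSS]
  have hGpsd : G.PosSemidef := by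
    have := hP.inv.posSemidef.conjTranspose_mul_mul_same (B := R)
    rwa [hRH.eq] at this
  have hCG : (C - G).PosSemidef := by
    have h1 : C - G = Rᴴ * (1 - P⁻¹) * R := by
      rw [hRH.eq, Matrix.mul_sub, Matrix.sub_mul, mul_one, hRR, hGdef]
    rw [h1]
    exact (one_sub_inv_psd hB).conjTranspose_mul_mul_same R
  refine ⟨G, hGpsd, hCG, ?_⟩
  have h1 : P + C = S * (1 + S⁻¹ * C * S⁻¹) * S := by
    rw [mul_add, add_mul, mul_one, hSS]
    congr 1
    symm
    calc S * (S⁻¹ * C * S⁻¹) * S = (S * S⁻¹) * C * (S⁻¹ * S) := by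
          simp only [Matrix.mul_assoc]
      _ = C := by rw [hinv1, hinv2, one_mul, mul_one]
  have h2 : ((1 : Matrix (Fin n) (Fin n) ℂ) + S⁻¹ * C * S⁻¹).det = (1 + G).det := by
    calc ((1 : Matrix (Fin n) (Fin n) ℂ) + S⁻¹ * C * S⁻¹).det
        = (1 + S⁻¹ * (C * S⁻¹)).det := by rw [Matrix.mul_assoc]
      _ = (1 + C * S⁻¹ * S⁻¹).det := by rw [det_one_add_mul_comm, Matrix.mul_assoc]
      _ = (1 + C * P⁻¹).det := by rw [Matrix.mul_assoc, hPinv]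
      _ = (1 + R * (R * P⁻¹)).det := by rw [← Matrix.mul_assoc, hRR]
      _ = (1 + R * P⁻¹ * R).det := by rw [det_one_add_mul_comm, Matrix.mul_assoc]
  calc (P + C).det = S.det * ((1 : Matrix (Fin n) (Fin n) ℂ) + S⁻¹ * C * S⁻¹).det * S.det := by
        rw [h1, det_mul, det_mul]
    _ = P.det * (1 + G).det := by rw [h2, mul_right_comm, hdetS]

/-- Proposition 3.3 of the paper: for Hermitian positive semidefinite `A`, `B` with
`A − B` positive semidefinite, `0 ≤ log det(I+A) − log det(I+B) ≤ log det(I+A−B)`,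
all three determinants being positive real numbers. -/
theorem stmt2 (n : ℕ) (A B : Matrix (Fin n) (Fin n) ℂ)
    (hA : A.PosSemidef) (hB : B.PosSemidef) (hAB : (A - B).PosSemidef) :
    ((1 + A).det.im = 0 ∧ 0 < (1 + A).det.re) ∧
      ((1 + B).det.im = 0 ∧ 0 < (1 + B).det.re) ∧
      ((1 + (A - B)).det.im = 0 ∧ 0 < (1 + (A - B)).det.re) ∧
      0 ≤ Real.log (1 + A).det.re - Real.log (1 + B).det.re ∧
      Real.log (1 + A).det.re - Real.log (1 + B).det.re ≤
        Real.log (1 + (A - B)).det.re := by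
  have hPA : ((1 : Matrix (Fin n) (Fin n) ℂ) + A).PosDef :=
    Matrix.PosDef.add_posSemidef Matrix.PosDef.one hA
  have hPB : ((1 : Matrix (Fin n) (Fin n) ℂ) + B).PosDef :=
    Matrix.PosDef.add_posSemidef Matrix.PosDef.one hB
  have hPC : ((1 : Matrix (Fin n) (Fin n) ℂ) + (A - B)).PosDef :=
    Matrix.PosDef.add_posSemidef Matrix.PosDef.one hAB
  have hda := hPA.det_pos
  have hdb := hPB.det_pos
  have hdc := hPC.det_pos
  rw [Complex.lt_def] at hda hdb hdc
  simp only [Complex.zero_re, Complex.zero_im] at hda hdb hdc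
  have hBA : (1 : Matrix (Fin n) (Fin n) ℂ) + B + (A - B) = 1 + A := by abel
  -- first inequality : det(1+B) ≤ det(1+A)
  obtain ⟨r, hr1, hr2⟩ := det_add_psd hPB hAB
  rw [hBA] at hr2
  have hare : (1 + A).det.re = (1 + B).det.re * r := by
    rw [hr2, Complex.mul_re, Complex.ofReal_re, Complex.ofReal_im, mul_zero, sub_zero]
  have hba : (1 + B).det.re ≤ (1 + A).det.re := by
    rw [hare]
    nlinarith [hdb.1]
  -- second inequality
  obtain ⟨G, hG, hCG, hdet⟩ := det_one_add_add_psd hB hAB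
  rw [hBA] at hdet
  have hPG : ((1 : Matrix (Fin n) (Fin n) ℂ) + G).PosDef :=
    Matrix.PosDef.add_posSemidef Matrix.PosDef.one hG
  have hdg := hPG.det_pos
  rw [Complex.lt_def] at hdg
  simp only [Complex.zero_re, Complex.zero_im] at hdg
  obtain ⟨s, hs1, hs2⟩ := det_add_psd hPG hCG
  have hGC : (1 : Matrix (Fin n) (Fin n) ℂ) + G + ((A - B) - G) = 1 + (A - B) := by abel
  rw [hGC] at hs2
  have hcre : (1 + (A - B)).det.re = (1 + G).det.re * s := by
    rw [hs2, Complex.mul_re, Complex.ofReal_re, Complex.ofReal_im, mul_zero, sub_zero]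
  have hgc : (1 + G).det.re ≤ (1 + (A - B)).det.re := by
    rw [hcre]
    nlinarith [hdg.1]
  have hare2 : (1 + A).det.re = (1 + B).det.re * (1 + G).det.re := by
    rw [hdet, Complex.mul_re, ← hdb.2, ← hdg.2, mul_zero, sub_zero]
  refine ⟨⟨hda.2.symm, hda.1⟩, ⟨hdb.2.symm, hdb.1⟩, ⟨hdc.2.symm, hdc.1⟩, ?_, ?_⟩
  · have := Real.log_le_log hdb.1 hba
    linarith
  · have hlog : Real.log (1 + A).det.re
        = Real.log (1 + B).det.re + Real.log (1 + G).det.re := by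
      rw [hare2, Real.log_mul hdb.1.ne' hdg.1.ne']
    have := Real.log_le_log hdg.1 hgc
    linarith
end

section
/- Let A ∈ ℝ^{n×m} and let B ∈ ℝ^{m×m} be symmetric positive semidefinite. Then log det(I_n + A B Aᵀ) ≤ Σ_{i=1}^m log(1 + σ_i(Aᵀ A)·σ_i(B)), where σ_i(M) denotes the i-th largest eigenvalue of a symmetric positive semidefinite real matrix M (equivalently its i-th singular value). -/
open Matrix Finset Equiv


/-- Tangent-line inequality for `t ↦ log(1+eᵗ)`, in multiplicative form. -/
lemma tangent_ineq {a b : ℝ} (ha : 0 < a) (hb : 0 < b) :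
    Real.log (1 + a) - Real.log (1 + b) ≤ (a / (1 + a)) * (Real.log a - Real.log b) := by
  have h1a : (0:ℝ) < 1 + a := by linarith
  have h1b : (0:ℝ) < 1 + b := by linarith
  set c : ℝ := a / (1 + a) with hc
  have hc0 : 0 ≤ c := by positivity
  have hc1 : c + (1 - c) = 1 := by ring
  have hc1' : 0 ≤ 1 - c := by
    have : c ≤ 1 := by
      rw [hc, div_le_one h1a]; linarith
    linarith
  have hmem1 : b / a ∈ Set.Ioi (0:ℝ) := Set.mem_Ioi.mpr (by positivity)
  have hmem2 : (1:ℝ) ∈ Set.Ioi (0:ℝ) := by norm_num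
  have key := (strictConcaveOn_log_Ioi.concaveOn).2 hmem1 hmem2 hc0 hc1' hc1
  have hcomb : c • (b / a) + (1 - c) • (1:ℝ) = (1 + b) / (1 + a) := by
    rw [smul_eq_mul, smul_eq_mul, hc]
    field_simp
    ring
  rw [hcomb, smul_eq_mul, smul_eq_mul, Real.log_one, mul_zero, add_zero,
    Real.log_div (by positivity) (by positivity),
    Real.log_div (by positivity) (by positivity)] at key
  -- key : c * (log b - log a) ≤ log (1+b) - log (1+a)
  nlinarith [key]

/-- Abel-summation nonpositivity. -/
lemma abel_nonpos (g d : ℕ → ℝ) (r : ℕ)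
    (hg0 : ∀ i, i < r → 0 ≤ g i)
    (hgmono : ∀ i, i + 1 < r → g (i+1) ≤ g i)
    (hD : ∀ k, k ≤ r → ∑ i ∈ range k, d i ≤ 0) :
    ∑ i ∈ range r, g i * d i ≤ 0 := by
  have := Finset.sum_range_by_parts g d r
  simp only [smul_eq_mul] at this
  rw [this]
  have h1 : g (r-1) * ∑ i ∈ range r, d i ≤ 0 := by
    rcases Nat.eq_zero_or_pos r with hr | hr
    · simp [hr]
    · exact mul_nonpos_of_nonneg_of_nonpos (hg0 _ (Nat.sub_lt hr one_pos)) (hD r le_rfl)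
  have h2 : 0 ≤ ∑ i ∈ range (r-1), (g (i+1) - g i) * ∑ j ∈ range (i+1), d j := by
    apply Finset.sum_nonneg
    intro i hi
    rw [Finset.mem_range] at hi
    have hi' : i + 1 < r := by omega
    nlinarith [hgmono i hi', hD (i+1) (by omega : i + 1 ≤ r)]
  linarith

/-- Hardy–Littlewood–Pólya transfer, positive case. -/
lemma hlp_pos (a b : ℕ → ℝ) (r : ℕ)
    (ha : ∀ i, i < r → 0 < a i)
    (hb : ∀ i, i < r → 0 < b i)
    (hamono : ∀ i, i + 1 < r → a (i+1) ≤ a i)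
    (hprod : ∀ k, k ≤ r → ∏ i ∈ range k, a i ≤ ∏ i ∈ range k, b i) :
    ∑ i ∈ range r, Real.log (1 + a i) ≤ ∑ i ∈ range r, Real.log (1 + b i) := by
  rw [← sub_nonpos, ← Finset.sum_sub_distrib]
  calc ∑ i ∈ range r, (Real.log (1 + a i) - Real.log (1 + b i))
      ≤ ∑ i ∈ range r, (a i / (1 + a i)) * (Real.log (a i) - Real.log (b i)) := by
        apply Finset.sum_le_sum
        intro i hi
        rw [Finset.mem_range] at hi
        exact tangent_ineq (ha i hi) (hb i hi)
    _ ≤ 0 := by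
        apply abel_nonpos _ _ r
        · intro i hi
          have := ha i hi
          positivity
        · intro i hi
          have h1 := ha i (by omega)
          have h2 := ha (i+1) hi
          have h3 := hamono i hi
          rw [div_le_div_iff₀ (by linarith) (by linarith)]
          nlinarith
        · intro k hk
          have hap : 0 < ∏ i ∈ range k, a i :=
            Finset.prod_pos (fun i hi => ha i (lt_of_lt_of_le (Finset.mem_range.mp hi) hk))
          have hbp : 0 < ∏ i ∈ range k, b i := lt_of_lt_of_le hap (hprod k hk)
          have : ∑ i ∈ range k, (Real.log (a i) - Real.log (b i))
              = Real.log (∏ i ∈ range k, a i) - Real.log (∏ i ∈ range k, b i) := by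
            rw [Finset.sum_sub_distrib, Real.log_prod, Real.log_prod]
            · intro i hi; exact ne_of_gt (hb i (lt_of_lt_of_le (Finset.mem_range.mp hi) hk))
            · intro i hi; exact ne_of_gt (ha i (lt_of_lt_of_le (Finset.mem_range.mp hi) hk))
          rw [this, sub_nonpos]
          exact Real.log_le_log hap (hprod k hk)

/-- Weak log-majorization transfer with possible zeros. -/
lemma hlp (a b : ℕ → ℝ) (m : ℕ)
    (ha0 : ∀ i, 0 ≤ a i)
    (hb0 : ∀ i, 0 ≤ b i)
    (hamono : ∀ i j, i ≤ j → a j ≤ a i)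
    (hprod : ∀ k, k ≤ m → ∏ i ∈ range k, a i ≤ ∏ i ∈ range k, b i) :
    ∑ i ∈ range m, Real.log (1 + a i) ≤ ∑ i ∈ range m, Real.log (1 + b i) := by
  classical
  have hex : ∃ k, a k ≤ 0 ∨ m ≤ k := ⟨m, Or.inr le_rfl⟩
  set r := Nat.find hex with hr
  have hrspec := Nat.find_spec hex
  have hrm : r ≤ m := Nat.find_le (Or.inr le_rfl)
  have hpos : ∀ i, i < r → 0 < a i := by
    intro i hi
    have := Nat.find_min hex hi
    push_neg at this
    exact this.1
  have hzero : ∀ i, r ≤ i → i < m → a i = 0 := by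
    intro i hi him
    rcases hrspec with h' | h'
    · exact le_antisymm (le_trans (hamono r i hi) h') (ha0 i)
    · omega
  have hbpos : ∀ i, i < r → 0 < b i := by
    intro i hi
    have hap : 0 < ∏ i ∈ range r, a i := Finset.prod_pos (fun j hj => hpos j (Finset.mem_range.mp hj))
    have hbp : 0 < ∏ i ∈ range r, b i := lt_of_lt_of_le hap (hprod r hrm)
    rcases lt_or_eq_of_le (hb0 i) with h | h
    · exact h
    · exfalso
      rw [Finset.prod_eq_zero (Finset.mem_range.mpr hi) h.symm] at hbp
      exact lt_irrefl 0 hbp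
  have hmain := hlp_pos a b r hpos hbpos (fun i hi => hamono i (i+1) (Nat.le_succ i))
    (fun k hk => hprod k (le_trans hk hrm))
  have hsplitA : ∑ i ∈ range m, Real.log (1 + a i) = ∑ i ∈ range r, Real.log (1 + a i) := by
    rw [← Finset.sum_range_add_sum_Ico _ hrm]
    have : ∑ i ∈ Finset.Ico r m, Real.log (1 + a i) = 0 := by
      apply Finset.sum_eq_zero
      intro i hi
      rw [Finset.mem_Ico] at hi
      rw [hzero i hi.1 hi.2, add_zero, Real.log_one]
    rw [this, add_zero]
  have hsplitB : ∑ i ∈ range r, Real.log (1 + b i) ≤ ∑ i ∈ range m, Real.log (1 + b i) := by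
    rw [← Finset.sum_range_add_sum_Ico _ hrm]
    have : 0 ≤ ∑ i ∈ Finset.Ico r m, Real.log (1 + b i) := by
      apply Finset.sum_nonneg
      intro i hi
      apply Real.log_nonneg
      linarith [hb0 i]
    linarith
  rw [hsplitA]
  exact le_trans hmain hsplitB


lemma cauchy_binet {k m : ℕ} (d : Fin m → ℝ) (Y : Matrix (Fin m) (Fin k) ℝ) :
    det (Yᵀ * Matrix.diagonal d * Y)
      = ∑ s : {s : Finset (Fin m) // s.card = k},
          (∏ i ∈ s.1, d i) * (det (Y.submatrix (s.1.orderEmbOfFin s.2) id))^2 := by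
  classical
  -- Step 1: expand det as a multilinear map of the rows
  have hM : Yᵀ * Matrix.diagonal d * Y = Matrix.of (fun a => ∑ j, (Y j a * d j) • (Y j)) := by
    ext a b
    rw [Matrix.mul_apply]
    simp only [Matrix.mul_diagonal, Matrix.transpose_apply, Matrix.of_apply,
      Finset.sum_apply, Pi.smul_apply, smul_eq_mul]
  have step2 : det (Yᵀ * Matrix.diagonal d * Y)
      = ∑ r : Fin k → Fin m, (∏ a, (Y (r a) a * d (r a))) • det (Y.submatrix r id) := by
    rw [hM]
    have : det (Matrix.of (fun a => ∑ j, (Y j a * d j) • (Y j)))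
        = (Matrix.detRowAlternating : (Fin k → ℝ) [⋀^Fin k]→ₗ[ℝ] ℝ).toMultilinearMap
            (fun a => ∑ j, (Y j a * d j) • (Y j)) := rfl
    rw [this, MultilinearMap.map_sum]
    congr 1
    funext r
    rw [MultilinearMap.map_smul_univ]
    rfl
  rw [step2]
  -- Step 3: kill non-injective terms
  rw [← Finset.sum_filter_add_sum_filter_not Finset.univ (fun r => Function.Injective r)]
  have hzero : ∑ r ∈ Finset.univ.filter (fun r => ¬ Function.Injective r),
      (∏ a, (Y (r a) a * d (r a))) • det (Y.submatrix r id) = 0 := by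
    apply Finset.sum_eq_zero
    intro r hr
    rw [Finset.mem_filter] at hr
    rw [Function.not_injective_iff] at hr
    obtain ⟨a, b, hab, hne⟩ := hr.2
    have : det (Y.submatrix r id) = 0 :=
      Matrix.det_zero_of_row_eq hne (by ext c; simp [hab])
    rw [this, smul_zero]
  rw [hzero, add_zero]
  -- Step 4: reindex injective maps by (subset, permutation)
  have key : ∀ (s : Finset (Fin m)) (hs : s.card = k) (g : Fin k → Fin m),
      Function.Injective g → Finset.univ.image g = s →
      ∃ σ : Equiv.Perm (Fin k), ∀ a, s.orderEmbOfFin hs (σ a) = g a := by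
    intro s hs g hginj himg
    have hmem : ∀ a, g a ∈ s := by
      intro a; rw [← himg]; exact Finset.mem_image_of_mem g (Finset.mem_univ a)
    set φ : Fin k → Fin k := fun a => (s.orderIsoOfFin hs).symm ⟨g a, hmem a⟩ with hφ
    have hφinj : Function.Injective φ := by
      intro a b hab
      have h2 := congrArg (fun z => ((s.orderIsoOfFin hs) z : Fin m)) hab
      simp only [hφ, OrderIso.apply_symm_apply] at h2
      exact hginj h2
    refine ⟨Equiv.ofBijective φ (Finite.injective_iff_bijective.mp hφinj), fun a => ?_⟩
    show s.orderEmbOfFin hs (φ a) = g a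
    rw [hφ, ← Finset.coe_orderIsoOfFin_apply, OrderIso.apply_symm_apply]
  have hbij : ∑ r ∈ Finset.univ.filter (fun r => Function.Injective r),
      (∏ a, (Y (r a) a * d (r a))) • det (Y.submatrix r id)
      = ∑ p : {s : Finset (Fin m) // s.card = k} × Equiv.Perm (Fin k),
          (∏ a, (Y (p.1.1.orderEmbOfFin p.1.2 (p.2 a)) a * d (p.1.1.orderEmbOfFin p.1.2 (p.2 a)))) •
            det (Y.submatrix (fun a => p.1.1.orderEmbOfFin p.1.2 (p.2 a)) id) := by
    apply Eq.symm
    apply Finset.sum_bij (i := fun (p : {s : Finset (Fin m) // s.card = k} × Equiv.Perm (Fin k))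
      (_ : p ∈ Finset.univ) => (fun a => p.1.1.orderEmbOfFin p.1.2 (p.2 a) : Fin k → Fin m))
    · intro p _
      simp only [Finset.mem_filter, Finset.mem_univ, true_and]
      exact (p.1.1.orderEmbOfFin p.1.2).injective.comp p.2.injective
    · intro p _ q _ hpq
      have himg : ∀ (p : {s : Finset (Fin m) // s.card = k} × Equiv.Perm (Fin k)),
          Finset.univ.image (fun a => p.1.1.orderEmbOfFin p.1.2 (p.2 a)) = p.1.1 := by
        intro p
        ext x
        simp only [Finset.mem_image, Finset.mem_univ, true_and]
        constructor
        · rintro ⟨a, rfl⟩; exact Finset.orderEmbOfFin_mem _ _ _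
        · intro hx
          have : x ∈ Set.range (p.1.1.orderEmbOfFin p.1.2) := by
            rw [Finset.range_orderEmbOfFin]; exact hx
          obtain ⟨a, ha⟩ := this
          exact ⟨p.2.symm a, by simp [ha]⟩
      have hs : p.1 = q.1 := by
        apply Subtype.ext
        rw [← himg p, ← himg q, hpq]
      obtain ⟨⟨s1, hs1⟩, σ⟩ := p
      obtain ⟨⟨s2, hs2⟩, τ⟩ := q
      simp only [Subtype.mk.injEq] at hs
      subst hs
      simp only [Prod.mk.injEq, Subtype.mk.injEq, true_and]
      apply Equiv.ext
      intro a
      apply (s1.orderEmbOfFin hs1).injective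
      exact congrFun hpq a
    · intro g hg
      rw [Finset.mem_filter] at hg
      have hginj := hg.2
      have hcard : (Finset.univ.image g).card = k := by
        rw [Finset.card_image_of_injective _ hginj, Finset.card_univ, Fintype.card_fin]
      obtain ⟨σ, hσ⟩ := key (Finset.univ.image g) hcard g hginj rfl
      exact ⟨(⟨Finset.univ.image g, hcard⟩, σ), Finset.mem_univ _, funext hσ⟩
    · intro p _
      rfl
  rw [hbij]
  -- Step 5: compute each fiber
  rw [Fintype.sum_prod_type]
  apply Finset.sum_congr rfl
  intro s _
  set e := s.1.orderEmbOfFin s.2 with he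
  have hsub : ∀ σ : Equiv.Perm (Fin k),
      Y.submatrix (fun a => e (σ a)) id = (Y.submatrix e id).submatrix σ id := by
    intro σ; ext a b; simp [Matrix.submatrix_apply]
  calc ∑ σ : Equiv.Perm (Fin k), (∏ a, (Y (e (σ a)) a * d (e (σ a)))) •
          det (Y.submatrix (fun a => e (σ a)) id)
      = ∑ σ : Equiv.Perm (Fin k), (∏ i ∈ s.1, d i) *
          ((Equiv.Perm.sign σ : ℝ) * ∏ a, Y (e (σ a)) a) * det (Y.submatrix e id) := by
        apply Finset.sum_congr rfl
        intro σ _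
        rw [hsub σ, Matrix.det_permute, Finset.prod_mul_distrib]
        have hd : ∏ a, d (e (σ a)) = ∏ i ∈ s.1, d i := by
          rw [Equiv.prod_comp σ (fun a => d (e a))]
          rw [← Finset.prod_image (f := d) (g := e) (by
            intro x _ y _ hxy; exact (s.1.orderEmbOfFin s.2).injective hxy)]
          congr 1
          ext x
          simp only [Finset.mem_image, Finset.mem_univ, true_and]
          constructor
          · rintro ⟨a, rfl⟩; exact Finset.orderEmbOfFin_mem _ _ _
          · intro hx
            have : x ∈ Set.range e := by rw [he, Finset.range_orderEmbOfFin]; exact hx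
            exact this
        rw [hd]
        simp only [smul_eq_mul]
        ring
    _ = (∏ i ∈ s.1, d i) * (det (Y.submatrix e id))^2 := by
        rw [← Finset.sum_mul]
        have : ∑ σ : Equiv.Perm (Fin k), (∏ i ∈ s.1, d i) *
            ((Equiv.Perm.sign σ : ℝ) * ∏ a, Y (e (σ a)) a)
            = (∏ i ∈ s.1, d i) * det (Y.submatrix e id) := by
          rw [← Finset.mul_sum]
          congr 1
          rw [Matrix.det_apply]
          apply Finset.sum_congr rfl
          intro σ _
          simp only [Matrix.submatrix_apply, id_eq, Units.smul_def, zsmul_eq_mul]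
        rw [this]
        ring


/-- `eigs M i` is the `i`-th largest eigenvalue of a Hermitian (symmetric) real matrix `M`
(junk value `0` if `M` is not Hermitian); for a symmetric positive semidefinite matrix
these coincide with its singular values, sorted in non-increasing order. -/
noncomputable def eigs {d : ℕ} (M : Matrix (Fin d) (Fin d) ℝ) : Fin d → ℝ :=
  if h : M.IsHermitian then
    fun i => (h.eigenvalues ∘ Tuple.sort h.eigenvalues) i.rev
  else 0

/-- The permutation sending `i` to the index of the `i`-th largest eigenvalue. -/
noncomputable def eigPerm {d : ℕ} {M : Matrix (Fin d) (Fin d) ℝ} (h : M.IsHermitian) :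
    Equiv.Perm (Fin d) :=
  (Fin.revPerm).trans (Tuple.sort h.eigenvalues)

lemma eigs_eq {d : ℕ} {M : Matrix (Fin d) (Fin d) ℝ} (h : M.IsHermitian) (i : Fin d) :
    eigs M i = h.eigenvalues (eigPerm h i) := by
  rw [eigs, dif_pos h]
  rfl

lemma eigs_antitone {d : ℕ} {M : Matrix (Fin d) (Fin d) ℝ} (h : M.IsHermitian) :
    Antitone (eigs M) := by
  intro i j hij
  rw [eigs, dif_pos h]
  exact Tuple.monotone_sort h.eigenvalues (Fin.rev_le_rev.mpr hij)

lemma eigs_nonneg {d : ℕ} {M : Matrix (Fin d) (Fin d) ℝ} (hM : M.PosSemidef) (i : Fin d) :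
    0 ≤ eigs M i := by
  rw [eigs_eq hM.1]
  exact hM.eigenvalues_nonneg _

lemma strictMono_fin_le {k m : ℕ} {f : Fin k → Fin m} (hf : StrictMono f) (j : Fin k) :
    (j : ℕ) ≤ (f j : ℕ) := by
  obtain ⟨n, hn⟩ : ∃ n, (j : ℕ) = n := ⟨j, rfl⟩
  induction n generalizing j with
  | zero => omega
  | succ n ih =>
    have hj' : n < k := by omega
    have h1 : n ≤ ((f ⟨n, hj'⟩ : Fin m) : ℕ) := ih ⟨n, hj'⟩ rfl
    have h2 : (⟨n, hj'⟩ : Fin k) < j := by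
      rw [Fin.lt_def]; simp [hn]
    have := hf h2
    rw [Fin.lt_def] at this
    omega

/-- Product of an antitone nonneg function over any `k`-subset is at most the
product over the first `k` indices. -/
lemma prod_sel {m k : ℕ} (hk : k ≤ m) (w : Fin m → ℝ) (hw : Antitone w)
    (hw0 : ∀ i, 0 ≤ w i) (s : Finset (Fin m)) (hs : s.card = k) :
    ∏ i ∈ s, w i ≤ ∏ j : Fin k, w (Fin.castLE hk j) := by
  have himg : Finset.univ.image (s.orderEmbOfFin hs) = s := by
    ext x
    simp only [Finset.mem_image, Finset.mem_univ, true_and]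
    constructor
    · rintro ⟨a, rfl⟩; exact Finset.orderEmbOfFin_mem _ _ _
    · intro hx
      have : x ∈ Set.range (s.orderEmbOfFin hs) := by
        rw [Finset.range_orderEmbOfFin]; exact hx
      exact this
  rw [← himg, Finset.prod_image (by intro x _ y _ h; exact (s.orderEmbOfFin hs).injective h)]
  apply Finset.prod_le_prod (fun j _ => hw0 _)
  intro j _
  apply hw
  rw [Fin.le_def]
  exact strictMono_fin_le (s.orderEmbOfFin hs).strictMono j

lemma star_coe_eigenvectorUnitary {m : ℕ} {B : Matrix (Fin m) (Fin m) ℝ} (h : B.IsHermitian) :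
    (star (h.eigenvectorUnitary : Matrix (Fin m) (Fin m) ℝ)) =
      (h.eigenvectorUnitary : Matrix (Fin m) (Fin m) ℝ)ᵀ := by
  rw [Matrix.star_eq_conjTranspose, Matrix.conjTranspose_eq_transpose_of_trivial]

lemma diag_ofReal {m : ℕ} (f : Fin m → ℝ) :
    Matrix.diagonal (RCLike.ofReal ∘ f) = Matrix.diagonal f := by
  congr 1

lemma transpose_mul_self_eigUnitary {m : ℕ} {B : Matrix (Fin m) (Fin m) ℝ} (h : B.IsHermitian) :
    (h.eigenvectorUnitary : Matrix (Fin m) (Fin m) ℝ)ᵀ *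
      (h.eigenvectorUnitary : Matrix (Fin m) (Fin m) ℝ) = 1 := by
  rw [← star_coe_eigenvectorUnitary h]
  exact Unitary.coe_star_mul_self h.eigenvectorUnitary

lemma self_mul_transpose_eigUnitary {m : ℕ} {B : Matrix (Fin m) (Fin m) ℝ} (h : B.IsHermitian) :
    (h.eigenvectorUnitary : Matrix (Fin m) (Fin m) ℝ) *
      (h.eigenvectorUnitary : Matrix (Fin m) (Fin m) ℝ)ᵀ = 1 := by
  rw [← star_coe_eigenvectorUnitary h]
  exact Unitary.coe_mul_star_self h.eigenvectorUnitary

lemma spectral_real {m : ℕ} {B : Matrix (Fin m) (Fin m) ℝ} (h : B.IsHermitian) :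
    (h.eigenvectorUnitary : Matrix (Fin m) (Fin m) ℝ)ᵀ * B *
      (h.eigenvectorUnitary : Matrix (Fin m) (Fin m) ℝ) = Matrix.diagonal h.eigenvalues := by
  rw [← star_coe_eigenvectorUnitary h, ← diag_ofReal h.eigenvalues]
  have hs := h.spectral_theorem
  rw [Unitary.conjStarAlgAut_apply] at hs
  rw [congrArg (fun X => star (h.eigenvectorUnitary : Matrix (Fin m) (Fin m) ℝ) * X *
    (h.eigenvectorUnitary : Matrix (Fin m) (Fin m) ℝ)) hs]
  simp only [← Matrix.mul_assoc, Unitary.coe_star_mul_self, Matrix.one_mul]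
  rw [Matrix.mul_assoc, Unitary.coe_star_mul_self, Matrix.mul_one]

/-- Compression bound: `det (Wᵀ B W) ≤ (∏ top-k eigenvalues of B) * det (Wᵀ W)`. -/
lemma L1 {m k : ℕ} (hk : k ≤ m) {B : Matrix (Fin m) (Fin m) ℝ} (hB : B.PosSemidef)
    (W : Matrix (Fin m) (Fin k) ℝ) :
    det (Wᵀ * B * W) ≤ (∏ j : Fin k, eigs B (Fin.castLE hk j)) * det (Wᵀ * W) := by
  classical
  set U : Matrix (Fin m) (Fin m) ℝ := (hB.1.eigenvectorUnitary : Matrix (Fin m) (Fin m) ℝ) with hUdef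
  set Y : Matrix (Fin m) (Fin k) ℝ := Uᵀ * W with hYdef
  have hBU : B = U * Matrix.diagonal hB.1.eigenvalues * Uᵀ := by
    have h := hB.1.spectral_theorem
    rwa [Unitary.conjStarAlgAut_apply, star_coe_eigenvectorUnitary hB.1, diag_ofReal] at h
  have claim1 : Wᵀ * B * W = Yᵀ * Matrix.diagonal hB.1.eigenvalues * Y := by
    rw [hYdef, Matrix.transpose_mul, Matrix.transpose_transpose]
    conv_lhs => rw [hBU]
    simp only [Matrix.mul_assoc]
  have claim2 : Wᵀ * W = Yᵀ * Matrix.diagonal (fun _ : Fin m => (1:ℝ)) * Y := by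
    rw [hYdef, Matrix.transpose_mul, Matrix.transpose_transpose, Matrix.diagonal_one,
      Matrix.mul_one, Matrix.mul_assoc, ← Matrix.mul_assoc U Uᵀ W,
      self_mul_transpose_eigUnitary hB.1, Matrix.one_mul]
  rw [claim1, claim2, cauchy_binet, cauchy_binet, Finset.mul_sum]
  apply Finset.sum_le_sum
  intro s _
  simp only [Finset.prod_const_one, one_mul]
  apply mul_le_mul_of_nonneg_right _ (sq_nonneg _)
  -- ∏ i ∈ s, eigenvalues i ≤ ∏ top-k eigs
  have heval : ∀ i, hB.1.eigenvalues i = eigs B ((eigPerm hB.1).symm i) := by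
    intro i
    rw [eigs_eq hB.1, Equiv.apply_symm_apply]
  calc ∏ i ∈ s.1, hB.1.eigenvalues i = ∏ i ∈ s.1, eigs B ((eigPerm hB.1).symm i) := by
        exact Finset.prod_congr rfl (fun i _ => heval i)
    _ = ∏ j ∈ s.1.image (eigPerm hB.1).symm, eigs B j := by
        rw [Finset.prod_image (fun x _ y _ h => (eigPerm hB.1).symm.injective h)]
    _ ≤ ∏ j : Fin k, eigs B (Fin.castLE hk j) := by
        apply prod_sel hk _ (eigs_antitone hB.1) (eigs_nonneg hB)
        rw [Finset.card_image_of_injective _ (eigPerm hB.1).symm.injective, s.2]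

/-- A top-`k` orthonormal eigenvector frame. -/
lemma eigframe {m k : ℕ} (hk : k ≤ m) {M : Matrix (Fin m) (Fin m) ℝ} (hM : M.IsHermitian) :
    ∃ V : Matrix (Fin m) (Fin k) ℝ, Vᵀ * V = 1 ∧
      Vᵀ * M * V = Matrix.diagonal (fun j => eigs M (Fin.castLE hk j)) := by
  classical
  set U : Matrix (Fin m) (Fin m) ℝ := (hM.eigenvectorUnitary : Matrix (Fin m) (Fin m) ℝ)
    with hUdef
  set e : Fin k → Fin m := fun j => eigPerm hM (Fin.castLE hk j) with hedef
  have heinj : Function.Injective e := by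
    intro a b hab
    have := (eigPerm hM).injective hab
    exact Fin.castLE_injective hk this
  refine ⟨U.submatrix id e, ?_, ?_⟩
  · have h1 : (U.submatrix id e)ᵀ * (U.submatrix id e) = (Uᵀ * U).submatrix e e := by
      rw [Matrix.transpose_submatrix]
      exact (Matrix.submatrix_mul Uᵀ U e id e Function.bijective_id).symm
    rw [h1, transpose_mul_self_eigUnitary hM]
    ext a b
    simp only [Matrix.submatrix_apply, Matrix.one_apply, heinj.eq_iff]
  · have h1 : (U.submatrix id e)ᵀ * M = (Uᵀ * M).submatrix e id := by
      rw [Matrix.transpose_submatrix]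
      exact (Matrix.submatrix_mul Uᵀ M e id id Function.bijective_id).symm
    have h2 : (Uᵀ * M).submatrix e id * U.submatrix id e = (Uᵀ * M * U).submatrix e e :=
      (Matrix.submatrix_mul (Uᵀ * M) U e id e Function.bijective_id).symm
    rw [h1, h2, spectral_real hM]
    ext a b
    simp only [Matrix.submatrix_apply, Matrix.diagonal_apply, heinj.eq_iff]
    split
    · next h => subst h; rw [eigs_eq hM]
    · rfl

open scoped MatrixOrder in
/-- Square root of a positive semidefinite real matrix. -/
noncomputable def Matrix.PosSemidef.sqrt {m : ℕ} {C : Matrix (Fin m) (Fin m) ℝ}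
    (_hC : C.PosSemidef) : Matrix (Fin m) (Fin m) ℝ :=
  CFC.sqrt C

open scoped MatrixOrder in
lemma Matrix.PosSemidef.posSemidef_sqrt {m : ℕ} {C : Matrix (Fin m) (Fin m) ℝ}
    (hC : C.PosSemidef) : hC.sqrt.PosSemidef :=
  (CFC.sqrt_nonneg C).posSemidef

open scoped MatrixOrder in
lemma Matrix.PosSemidef.sq_sqrt {m : ℕ} {C : Matrix (Fin m) (Fin m) ℝ}
    (hC : C.PosSemidef) : hC.sqrt ^ 2 = C :=
  CFC.sq_sqrt C hC.nonneg

/-- Key log-majorization step: top-`k` products. -/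
lemma mainprod {m k : ℕ} (hk : k ≤ m) {B C : Matrix (Fin m) (Fin m) ℝ}
    (hB : B.PosSemidef) (hC : C.PosSemidef) :
    ∏ j : Fin k, eigs (hC.sqrt * B * hC.sqrt) (Fin.castLE hk j)
      ≤ ∏ j : Fin k, (eigs C (Fin.castLE hk j) * eigs B (Fin.castLE hk j)) := by
  classical
  set S := hC.sqrt with hSdef
  have hSh : Sᵀ = S := hC.posSemidef_sqrt.1
  have hM : (S * B * S).PosSemidef := by
    have := hB.mul_mul_conjTranspose_same S
    rwa [Matrix.conjTranspose_eq_transpose_of_trivial, hSh] at this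
  obtain ⟨V, hV1, hV2⟩ := eigframe hk hM.1
  have hdet : ∏ j : Fin k, eigs (S * B * S) (Fin.castLE hk j) = det (Vᵀ * (S * B * S) * V) := by
    rw [hV2, Matrix.det_diagonal]
  have hfr : Vᵀ * (S * B * S) * V = (S * V)ᵀ * B * (S * V) := by
    rw [Matrix.transpose_mul, hSh]
    simp only [Matrix.mul_assoc]
  have hfr2 : (S * V)ᵀ * (S * V) = Vᵀ * C * V := by
    rw [Matrix.transpose_mul, hSh, Matrix.mul_assoc, ← Matrix.mul_assoc S S V, ← pow_two,
      hC.sq_sqrt, Matrix.mul_assoc]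
  have step1 : det (Vᵀ * (S * B * S) * V)
      ≤ (∏ j : Fin k, eigs B (Fin.castLE hk j)) * det (Vᵀ * C * V) := by
    rw [hfr, ← hfr2]
    exact L1 hk hB (S * V)
  have step2 : det (Vᵀ * C * V) ≤ (∏ j : Fin k, eigs C (Fin.castLE hk j)) := by
    have := L1 hk hC V
    rwa [hV1, Matrix.det_one, mul_one] at this
  have hBnn : 0 ≤ ∏ j : Fin k, eigs B (Fin.castLE hk j) :=
    Finset.prod_nonneg (fun j _ => eigs_nonneg hB _)
  calc ∏ j : Fin k, eigs (S * B * S) (Fin.castLE hk j)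
      = det (Vᵀ * (S * B * S) * V) := hdet
    _ ≤ (∏ j : Fin k, eigs B (Fin.castLE hk j)) * det (Vᵀ * C * V) := step1
    _ ≤ (∏ j : Fin k, eigs B (Fin.castLE hk j)) * (∏ j : Fin k, eigs C (Fin.castLE hk j)) :=
        mul_le_mul_of_nonneg_left step2 hBnn
    _ = ∏ j : Fin k, (eigs C (Fin.castLE hk j) * eigs B (Fin.castLE hk j)) := by
        rw [← Finset.prod_mul_distrib]
        exact Finset.prod_congr rfl (fun j _ => mul_comm _ _)

/-- Lemma 3.5 of the paper: `log det(I_n + A B Aᵀ) ≤ ∑_i log(1 + σ_i(Aᵀ A) σ_i(B))`. -/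
theorem stmt4 (n m : ℕ) (A : Matrix (Fin n) (Fin m) ℝ) (B : Matrix (Fin m) (Fin m) ℝ)
    (hB : B.PosSemidef) :
    Real.log (1 + A * B * Aᵀ).det ≤ ∑ i, Real.log (1 + eigs (Aᵀ * A) i * eigs B i) := by
  classical
  have hC : (Aᵀ * A).PosSemidef := by
    have := Matrix.posSemidef_conjTranspose_mul_self A
    rwa [Matrix.conjTranspose_eq_transpose_of_trivial] at this
  set C := Aᵀ * A with hCdef
  set S := hC.sqrt with hSdef
  have hSh : Sᵀ = S := hC.posSemidef_sqrt.1
  set M := S * B * S with hMdef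
  have hM : M.PosSemidef := by
    have := hB.mul_mul_conjTranspose_same S
    rwa [Matrix.conjTranspose_eq_transpose_of_trivial, hSh] at this
  -- Step 1: det (1 + A B Aᵀ) = det (1 + M)
  have h1 : (1 + A * B * Aᵀ).det = (1 + M).det := by
    calc (1 + A * B * Aᵀ).det = (1 + (A * B) * Aᵀ).det := by rw [Matrix.mul_assoc]
      _ = (1 + Aᵀ * (A * B)).det := Matrix.det_one_add_mul_comm (A * B) Aᵀ
      _ = (1 + S * (S * B)).det := by
          rw [← Matrix.mul_assoc, ← hCdef, ← hC.sq_sqrt, pow_two, ← hSdef, Matrix.mul_assoc]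
      _ = (1 + (S * B) * S).det := Matrix.det_one_add_mul_comm S (S * B)
      _ = (1 + M).det := by rw [hMdef, Matrix.mul_assoc]
  -- Step 2: det (1 + M) = ∏ (1 + eigs M i)
  set U : Matrix (Fin m) (Fin m) ℝ := (hM.1.eigenvectorUnitary : Matrix (Fin m) (Fin m) ℝ)
    with hUdef
  have hMU : M = U * Matrix.diagonal hM.1.eigenvalues * Uᵀ := by
    have h := hM.1.spectral_theorem
    rwa [Unitary.conjStarAlgAut_apply, star_coe_eigenvectorUnitary hM.1, diag_ofReal] at h
  have h2 : (1 + M).det = ∏ i, (1 + eigs M i) := by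
    have hone : (1 : Matrix (Fin m) (Fin m) ℝ) + M
        = U * Matrix.diagonal (fun i => 1 + hM.1.eigenvalues i) * Uᵀ := by
      have : Matrix.diagonal (fun i => 1 + hM.1.eigenvalues i)
          = 1 + Matrix.diagonal hM.1.eigenvalues := by
        rw [← Matrix.diagonal_one, Matrix.diagonal_add]
      rw [this, Matrix.mul_add, Matrix.add_mul, Matrix.mul_one,
        self_mul_transpose_eigUnitary hM.1, ← hMU]
    rw [hone, Matrix.det_mul_right_comm, self_mul_transpose_eigUnitary hM.1, Matrix.one_mul,
      Matrix.det_diagonal]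
    calc ∏ i, (1 + hM.1.eigenvalues i) = ∏ i, (1 + hM.1.eigenvalues (eigPerm hM.1 i)) :=
          (Equiv.prod_comp (eigPerm hM.1) (fun x => 1 + hM.1.eigenvalues x)).symm
      _ = ∏ i, (1 + eigs M i) := Finset.prod_congr rfl (fun i _ => by rw [eigs_eq hM.1])
  -- Step 3: log
  have hlogM : Real.log (1 + M).det = ∑ i, Real.log (1 + eigs M i) := by
    rw [h2, Real.log_prod]
    intro i _
    have := eigs_nonneg hM i
    positivity
  -- Step 4: majorization transfer
  set a : ℕ → ℝ := fun i => if h : i < m then eigs M ⟨i, h⟩ else 0 with hadef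
  set b : ℕ → ℝ := fun i => if h : i < m then eigs C ⟨i, h⟩ * eigs B ⟨i, h⟩ else 0 with hbdef
  have ha0 : ∀ i, 0 ≤ a i := by
    intro i; rw [hadef]; dsimp only; split
    · exact eigs_nonneg hM _
    · exact le_rfl
  have hb0 : ∀ i, 0 ≤ b i := by
    intro i; rw [hbdef]; dsimp only; split
    · exact mul_nonneg (eigs_nonneg hC _) (eigs_nonneg hB _)
    · exact le_rfl
  have hamono : ∀ i j, i ≤ j → a j ≤ a i := by
    intro i j hij
    rw [hadef]; dsimp only
    by_cases hj : j < m
    · have hi : i < m := lt_of_le_of_lt hij hj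
      rw [dif_pos hj, dif_pos hi]
      exact eigs_antitone hM.1 (by exact hij)
    · rw [dif_neg hj]
      split
      · exact eigs_nonneg hM _
      · exact le_rfl
  have hprod : ∀ k, k ≤ m → ∏ i ∈ Finset.range k, a i ≤ ∏ i ∈ Finset.range k, b i := by
    intro k hk
    have hmain := mainprod hk hB hC
    calc ∏ i ∈ Finset.range k, a i = ∏ j : Fin k, a j.val :=
          (Fin.prod_univ_eq_prod_range a k).symm
      _ = ∏ j : Fin k, eigs M (Fin.castLE hk j) := by
          apply Finset.prod_congr rfl
          intro j _
          rw [hadef]; dsimp only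
          rw [dif_pos (lt_of_lt_of_le j.isLt hk)]
          rfl
      _ ≤ ∏ j : Fin k, (eigs C (Fin.castLE hk j) * eigs B (Fin.castLE hk j)) := hmain
      _ = ∏ j : Fin k, b j.val := by
          apply Finset.prod_congr rfl
          intro j _
          rw [hbdef]; dsimp only
          rw [dif_pos (lt_of_lt_of_le j.isLt hk)]
          rfl
      _ = ∏ i ∈ Finset.range k, b i := Fin.prod_univ_eq_prod_range b k
  have htrans := hlp a b m ha0 hb0 hamono hprod
  rw [h1, hlogM]
  calc ∑ i, Real.log (1 + eigs M i) = ∑ i ∈ Finset.range m, Real.log (1 + a i) := by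
        rw [← Fin.sum_univ_eq_sum_range (fun i => Real.log (1 + a i)) m]
        apply Finset.sum_congr rfl
        intro i _
        rw [hadef]; dsimp only
        rw [dif_pos i.isLt]
    _ ≤ ∑ i ∈ Finset.range m, Real.log (1 + b i) := htrans
    _ = ∑ i, Real.log (1 + eigs C i * eigs B i) := by
        rw [← Fin.sum_univ_eq_sum_range (fun i => Real.log (1 + b i)) m]
        apply Finset.sum_congr rfl
        intro i _
        rw [hbdef]; dsimp only
        rw [dif_pos i.isLt]
end

section
/- Let μ be the multivariate Gaussian probability measure on ℝ^{d_m} with mean m_pr ∈ ℝ^{d_m} and symmetric positive definite covariance matrix Γ_pr ∈ ℝ^{d_m×d_m}. Let P ∈ ℝ^{d_ρ×d_m} be such that Σ_pr := P Γ_pr Pᵀ is invertible, and set P_† := Γ_pr Pᵀ Σ_pr^{-1}. Then, with m distributed according to μ, the random vectors m ↦ P m (with values in ℝ^{d_ρ}) and m ↦ (I_{d_m} − P_† P) m (with values in ℝ^{d_m}) are independent. -/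
open Matrix MeasureTheory

section Aux
variable {d_m d_ρ : ℕ} (Γ : Matrix (Fin d_m) (Fin d_m) ℝ) (P : Matrix (Fin d_ρ) (Fin d_m) ℝ)

lemma auxA1 (hS : IsUnit (P * Γ * Pᵀ).det) :
    P * (Γ * Pᵀ * (P * Γ * Pᵀ)⁻¹) = 1 := by
  rw [← Matrix.mul_assoc, ← Matrix.mul_assoc, Matrix.mul_nonsing_inv _ hS]

lemma auxPQ (hS : IsUnit (P * Γ * Pᵀ).det) :
    P * (Γ * Pᵀ * (P * Γ * Pᵀ)⁻¹ * P) = P := by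
  rw [← Matrix.mul_assoc, ← Matrix.mul_assoc, ← Matrix.mul_assoc, Matrix.mul_assoc (P * Γ * Pᵀ),
    Matrix.mul_nonsing_inv_cancel_left _ _ hS]

lemma auxA2 (hΓ : Γ.PosDef) (hS : IsUnit (P * Γ * Pᵀ).det) :
    (Γ * Pᵀ * (P * Γ * Pᵀ)⁻¹ * P)ᵀ * Γ⁻¹ * (Γ * Pᵀ * (P * Γ * Pᵀ)⁻¹ * P)
      + (1 - Γ * Pᵀ * (P * Γ * Pᵀ)⁻¹ * P)ᵀ * Γ⁻¹ * (1 - Γ * Pᵀ * (P * Γ * Pᵀ)⁻¹ * P) = Γ⁻¹ := by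
  have hΓu : IsUnit Γ.det := isUnit_iff_ne_zero.mpr hΓ.det_pos.ne'
  have hΓΓ : Γ * Γ⁻¹ = 1 := Matrix.mul_nonsing_inv _ hΓu
  have hΓΓ' : Γ⁻¹ * Γ = 1 := Matrix.nonsing_inv_mul _ hΓu
  have hΓT : Γᵀ = Γ := hΓ.isHermitian
  have hST : (P * Γ * Pᵀ)ᵀ = P * Γ * Pᵀ := by
    simp only [Matrix.transpose_mul, Matrix.transpose_transpose]
    rw [hΓT, Matrix.mul_assoc]
  have hSiT : ((P * Γ * Pᵀ)⁻¹)ᵀ = (P * Γ * Pᵀ)⁻¹ := by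
    rw [Matrix.transpose_nonsing_inv, hST]
  set S := P * Γ * Pᵀ with hSdef
  set Q := Γ * Pᵀ * S⁻¹ * P with hQdef
  set R := Pᵀ * S⁻¹ * P with hRdef
  have hQT : Qᵀ = R * Γ := by
    rw [hQdef, hRdef]
    simp only [Matrix.transpose_mul, Matrix.transpose_transpose, hSiT, hΓT]
    simp [Matrix.mul_assoc]
  have hQtG : Qᵀ * Γ⁻¹ = R := by rw [hQT, Matrix.mul_assoc, hΓΓ, Matrix.mul_one]
  have hGQ : Γ⁻¹ * Q = R := by
    rw [hQdef, hRdef, ← Matrix.mul_assoc, ← Matrix.mul_assoc, ← Matrix.mul_assoc, hΓΓ',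
      Matrix.one_mul]
  have hRQ : R * Q = R := by
    rw [hRdef, Matrix.mul_assoc (Pᵀ * S⁻¹), auxPQ Γ P hS]
  have hQQ : Qᵀ * Γ⁻¹ * Q = R := by rw [hQtG, hRQ]
  rw [Matrix.transpose_sub, Matrix.transpose_one, Matrix.sub_mul, Matrix.sub_mul,
    Matrix.mul_sub, Matrix.one_mul, Matrix.mul_one, hQQ, hQtG, hGQ, Matrix.mul_sub,
    Matrix.mul_one, hRQ]
  abel

lemma auxDot (M N : Matrix (Fin d_m) (Fin d_m) ℝ) (y : Fin d_m → ℝ) :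
    (M *ᵥ y) ⬝ᵥ (N *ᵥ (M *ᵥ y)) = y ⬝ᵥ ((Mᵀ * N * M) *ᵥ y) := by
  rw [Matrix.mulVec_mulVec, Matrix.dotProduct_mulVec, ← Matrix.vecMul_transpose,
    Matrix.vecMul_vecMul, ← Matrix.dotProduct_mulVec, ← Matrix.mul_assoc]

end Aux

lemma contDot {α : Type*} [TopologicalSpace α] {n : ℕ} {f g : α → (Fin n → ℝ)}
    (hf : Continuous f) (hg : Continuous g) : Continuous fun x => f x ⬝ᵥ g x := by
  unfold dotProduct
  exact continuous_finset_sum _ fun i _ =>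
    ((continuous_apply i).comp hf).mul ((continuous_apply i).comp hg)

lemma contMulVec {m n : ℕ} (M : Matrix (Fin m) (Fin n) ℝ) :
    Continuous fun x : Fin n → ℝ => M *ᵥ x :=
  M.mulVecLin.continuous_of_finiteDimensional

/-- Independence claim of Proposition 3.1 of the paper: under the Gaussian measure `μ` with
mean `m_pr` and positive definite covariance `Γ_pr` (density proportional to
`exp(−(x−m_pr)ᵀ Γ_pr⁻¹ (x−m_pr)/2)` w.r.t. Lebesgue measure), the random vectors
`m ↦ P m` and `m ↦ (I − P_† P) m` with `P_† := Γ_pr Pᵀ Σ_pr⁻¹` are independent. -/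
theorem stmt12 (d_m d_ρ : ℕ) (mpr : Fin d_m → ℝ)
    (Γpr : Matrix (Fin d_m) (Fin d_m) ℝ) (hΓpr : Γpr.PosDef)
    (P : Matrix (Fin d_ρ) (Fin d_m) ℝ)
    (hSpr : IsUnit (P * Γpr * Pᵀ).det)
    (μ : Measure (Fin d_m → ℝ)) [IsProbabilityMeasure μ]
    (c : ℝ)
    (hμ : μ = volume.withDensity fun x =>
      ENNReal.ofReal (c * Real.exp (-(1 / 2) * ((x - mpr) ⬝ᵥ (Γpr⁻¹ *ᵥ (x - mpr)))))) :
    ProbabilityTheory.IndepFun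
      (fun m : Fin d_m → ℝ => P *ᵥ m)
      (fun m : Fin d_m → ℝ =>
        ((1 : Matrix (Fin d_m) (Fin d_m) ℝ) - Γpr * Pᵀ * (P * Γpr * Pᵀ)⁻¹ * P) *ᵥ m) μ := by
  have hA1 : P * (Γpr * Pᵀ * (P * Γpr * Pᵀ)⁻¹) = 1 := auxA1 Γpr P hSpr
  have hA2 := auxA2 Γpr P hΓpr hSpr
  set Pd := Γpr * Pᵀ * (P * Γpr * Pᵀ)⁻¹ with hPddef
  set Q := Pd * P with hQdef
  set W : Matrix (Fin d_m) (Fin d_m) ℝ := 1 - Q with hWdef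
  -- basic algebra
  have hppd : ∀ u, P *ᵥ (Pd *ᵥ u) = u := fun u => by
    rw [Matrix.mulVec_mulVec, hA1, Matrix.one_mulVec]
  have hsurj : Function.Surjective P.mulVecLin := fun u => ⟨Pd *ᵥ u, hppd u⟩
  set k := Module.finrank ℝ (LinearMap.ker P.mulVecLin) with hkdef
  have hk : d_ρ + k = d_m := by
    have h := LinearMap.finrank_range_add_finrank_ker P.mulVecLin
    rw [LinearMap.range_eq_top.mpr hsurj, finrank_top] at h
    simpa using h
  -- the complement map n
  let bK : Module.Basis (Fin k) ℝ (LinearMap.ker P.mulVecLin) := Module.finBasis ℝ _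
  let n : (Fin k → ℝ) →ₗ[ℝ] (Fin d_m → ℝ) :=
    (LinearMap.ker P.mulVecLin).subtype ∘ₗ (bK.equivFun.symm : _ ≃ₗ[ℝ] _).toLinearMap
  have hPn : ∀ v, P *ᵥ n v = 0 := by
    intro v
    have h := (bK.equivFun.symm v).2
    rw [LinearMap.mem_ker] at h
    exact h
  have hninj : Function.Injective n :=
    (LinearMap.ker P.mulVecLin).injective_subtype.comp bK.equivFun.symm.injective
  have hnrange : ∀ x : Fin d_m → ℝ, P *ᵥ x = 0 → ∃ v, n v = x := by
    intro x hx
    refine ⟨bK.equivFun ⟨x, ?_⟩, ?_⟩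
    · rw [LinearMap.mem_ker]; exact hx
    · show ((LinearMap.ker P.mulVecLin).subtype) (bK.equivFun.symm (bK.equivFun ⟨x, _⟩)) = x
      rw [LinearEquiv.symm_apply_apply]
      rfl
  -- the main linear parametrization L
  set L : ((Fin d_ρ → ℝ) × (Fin k → ℝ)) →ₗ[ℝ] (Fin d_m → ℝ) :=
    (Pd.mulVecLin).coprod n with hLdef
  have hLapp : ∀ z : (Fin d_ρ → ℝ) × (Fin k → ℝ), L z = Pd *ᵥ z.1 + n z.2 := fun z => rfl
  have hPL : ∀ z, P *ᵥ L z = z.1 := by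
    intro z
    rw [hLapp, Matrix.mulVec_add, hppd, hPn, add_zero]
  have hWPd : W * Pd = 0 := by
    rw [hWdef, Matrix.sub_mul, Matrix.one_mul, hQdef, Matrix.mul_assoc, hA1, Matrix.mul_one,
      sub_self]
  have hWn : ∀ v, W *ᵥ n v = n v := by
    intro v
    rw [hWdef, Matrix.sub_mulVec, Matrix.one_mulVec, hQdef, ← Matrix.mulVec_mulVec, hPn,
      Matrix.mulVec_zero, sub_zero]
  have hWL : ∀ z, W *ᵥ L z = n z.2 := by
    intro z
    rw [hLapp, Matrix.mulVec_add, Matrix.mulVec_mulVec, hWPd, Matrix.zero_mulVec, zero_add, hWn]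
  have hLbij : Function.Bijective L := by
    constructor
    · intro z₁ z₂ hz
      have h1 : z₁.1 = z₂.1 := by
        have := congrArg (fun x => P *ᵥ x) hz
        simpa [hPL] using this
      have h2 : n z₁.2 = n z₂.2 := by
        have := congrArg (fun x => W *ᵥ x) hz
        simpa [hWL] using this
      exact Prod.ext h1 (hninj h2)
    · intro x
      obtain ⟨v, hv⟩ := hnrange (x - Pd *ᵥ (P *ᵥ x)) (by
        rw [Matrix.mulVec_sub, hppd, sub_self])
      exact ⟨(P *ᵥ x, v), by rw [hLapp]; simp [hv]⟩
  -- the coordinate equivalences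
  set σ : Fin d_ρ ⊕ Fin k ≃ Fin d_m := finSumFinEquiv.trans (finCongr hk) with hσdef
  set e := (MeasurableEquiv.sumPiEquivProdPi (fun _ : Fin d_ρ ⊕ Fin k => ℝ)).symm.trans
      (MeasurableEquiv.piCongrLeft (fun _ => ℝ) σ) with hedef
  have hepres : MeasurePreserving e volume volume :=
    (volume_measurePreserving_piCongrLeft (fun _ => ℝ) σ).comp
      (volume_measurePreserving_sumPiEquivProdPi_symm _)
  have heapp : ∀ (u : Fin d_ρ → ℝ) (v : Fin k → ℝ),
      (∀ i, e (u, v) (σ (Sum.inl i)) = u i) ∧ (∀ j, e (u, v) (σ (Sum.inr j)) = v j) := by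
    intro u v
    constructor <;> intro i <;>
      simp [hedef, MeasurableEquiv.trans_apply, MeasurableEquiv.coe_piCongrLeft,
        MeasurableEquiv.coe_sumPiEquivProdPi_symm, Equiv.piCongrLeft_apply_apply,
        Equiv.sumPiEquivProdPi_symm_apply]
  set eLin : (Fin d_m → ℝ) →ₗ[ℝ] ((Fin d_ρ → ℝ) × (Fin k → ℝ)) :=
    (LinearMap.funLeft ℝ ℝ (σ ∘ Sum.inl)).prod (LinearMap.funLeft ℝ ℝ (σ ∘ Sum.inr))
    with heLdef
  have hee : ∀ z : (Fin d_ρ → ℝ) × (Fin k → ℝ), eLin (e z) = z := by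
    rintro ⟨u, v⟩
    refine Prod.ext (funext fun i => ?_) (funext fun j => ?_)
    · simpa [heLdef, LinearMap.funLeft_apply] using (heapp u v).1 i
    · simpa [heLdef, LinearMap.funLeft_apply] using (heapp u v).2 j
  have heLbij : Function.Bijective eLin := by
    constructor
    · intro x y hxy
      funext i
      have h1 := congrArg Prod.fst hxy
      have h2 := congrArg Prod.snd hxy
      rcases hs : σ.symm i with s | s
      · have := congrFun h1 s
        simpa [heLdef, LinearMap.funLeft_apply, ← hs, Equiv.apply_symm_apply] using this
      · have := congrFun h2 s
        simpa [heLdef, LinearMap.funLeft_apply, ← hs, Equiv.apply_symm_apply] using this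
    · intro z; exact ⟨e z, hee z⟩
  set T : (Fin d_m → ℝ) →ₗ[ℝ] (Fin d_m → ℝ) := L ∘ₗ eLin with hTdef
  have hTe : ∀ z, T (e z) = L z := fun z => by rw [hTdef, LinearMap.comp_apply, hee]
  have hTbij : Function.Bijective T := hLbij.comp heLbij
  have hdet : LinearMap.det T ≠ 0 := by
    have := LinearEquiv.isUnit_det' (LinearEquiv.ofBijective T hTbij)
    rw [show ((LinearEquiv.ofBijective T hTbij : _ →ₗ[ℝ] _)) = T from LinearMap.ext fun _ => rfl] at this
    exact this.ne_zero
  have hTmeas : Measurable T := T.continuous_of_finiteDimensional.measurable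
  set D := ENNReal.ofReal |LinearMap.det T| with hDdef
  have hvol : (volume : Measure (Fin d_m → ℝ)) = D • Measure.map (⇑T) volume := by
    rw [Real.map_linearMap_volume_pi_eq_smul_volume_pi hdet, smul_smul, hDdef,
      ← ENNReal.ofReal_mul (abs_nonneg _), ← abs_mul, mul_inv_cancel₀ hdet, abs_one,
      ENNReal.ofReal_one, one_smul]
  -- density pieces
  set a := P *ᵥ mpr with hadef
  set b := W *ᵥ mpr with hbdef
  set F : (Fin d_ρ → ℝ) → ENNReal := fun u =>
    ENNReal.ofReal (Real.exp (-(1/2) * ((Pd *ᵥ (u - a)) ⬝ᵥ (Γpr⁻¹ *ᵥ (Pd *ᵥ (u - a)))))) with hFdef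
  set G : (Fin d_m → ℝ) → ENNReal := fun w =>
    ENNReal.ofReal (Real.exp (-(1/2) * ((w - b) ⬝ᵥ (Γpr⁻¹ *ᵥ (w - b))))) with hGdef
  have hquad : ∀ y : Fin d_m → ℝ,
      (y ⬝ᵥ (Γpr⁻¹ *ᵥ y)) =
        (Q *ᵥ y) ⬝ᵥ (Γpr⁻¹ *ᵥ (Q *ᵥ y)) + (W *ᵥ y) ⬝ᵥ (Γpr⁻¹ *ᵥ (W *ᵥ y)) := by
    intro y
    rw [auxDot, auxDot, ← dotProduct_add, ← Matrix.add_mulVec, hA2]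
  have hdens : ∀ x : Fin d_m → ℝ,
      ENNReal.ofReal (c * Real.exp (-(1/2) * ((x - mpr) ⬝ᵥ (Γpr⁻¹ *ᵥ (x - mpr))))) =
      ENNReal.ofReal c * F (P *ᵥ x) * G (W *ᵥ x) := by
    intro x
    have h1 : (P *ᵥ x) - a = P *ᵥ (x - mpr) := (Matrix.mulVec_sub _ _ _).symm
    have h2 : (W *ᵥ x) - b = W *ᵥ (x - mpr) := (Matrix.mulVec_sub _ _ _).symm
    simp only [hFdef, hGdef]
    rw [h1, h2, Matrix.mulVec_mulVec, ← hQdef, hquad (x - mpr), mul_add (-(1/2):ℝ),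
      Real.exp_add, ← mul_assoc c, ENNReal.ofReal_mul' (Real.exp_nonneg _),
      ENNReal.ofReal_mul' (Real.exp_nonneg _)]
  -- measurability
  have hPmeas : Measurable fun x : Fin d_m → ℝ => P *ᵥ x := (contMulVec P).measurable
  have hWmeas : Measurable fun x : Fin d_m → ℝ => W *ᵥ x := (contMulVec W).measurable
  have hFcont : Continuous F := by
    have hq : Continuous fun u : Fin d_ρ → ℝ => Pd *ᵥ (u - a) :=
      (contMulVec Pd).comp (continuous_id.sub continuous_const)
    exact ENNReal.continuous_ofReal.comp (Real.continuous_exp.comp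
      (continuous_const.mul (contDot hq ((contMulVec Γpr⁻¹).comp hq))))
  have hGcont : Continuous G := by
    have hq : Continuous fun w : Fin d_m → ℝ => w - b := continuous_id.sub continuous_const
    exact ENNReal.continuous_ofReal.comp (Real.continuous_exp.comp
      (continuous_const.mul (contDot hq ((contMulVec Γpr⁻¹).comp hq))))
  have hncont : Continuous n := n.continuous_of_finiteDimensional
  -- the key identity
  have key : ∀ (A : Set (Fin d_ρ → ℝ)) (B : Set (Fin d_m → ℝ)),
      MeasurableSet A → MeasurableSet B →
      μ ((fun m => P *ᵥ m) ⁻¹' A ∩ (fun m => W *ᵥ m) ⁻¹' B) =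
        (D * ENNReal.ofReal c) * (∫⁻ u, A.indicator 1 u * F u) *
          (∫⁻ v, B.indicator 1 (n v) * G (n v)) := by
    intro A B hA hB
    have hSmeas : MeasurableSet ((fun m => P *ᵥ m) ⁻¹' A ∩ (fun m => W *ᵥ m) ⁻¹' B) :=
      (hPmeas hA).inter (hWmeas hB)
    set H : (Fin d_m → ℝ) → ENNReal := fun x =>
      (A.indicator 1 (P *ᵥ x) * (ENNReal.ofReal c * F (P *ᵥ x))) *
      (B.indicator 1 (W *ᵥ x) * G (W *ᵥ x)) with hHdef
    have hHmeas : Measurable H := by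
      apply Measurable.mul
      · exact ((measurable_one.indicator hA).comp hPmeas).mul
          (measurable_const.mul (hFcont.measurable.comp hPmeas))
      · exact ((measurable_one.indicator hB).comp hWmeas).mul
          (hGcont.measurable.comp hWmeas)
    have hind : ∀ x, Set.indicator ((fun m => P *ᵥ m) ⁻¹' A ∩ (fun m => W *ᵥ m) ⁻¹' B)
        (fun x => ENNReal.ofReal
          (c * Real.exp (-(1/2) * ((x - mpr) ⬝ᵥ (Γpr⁻¹ *ᵥ (x - mpr)))))) x = H x := by
      intro x
      by_cases h1 : P *ᵥ x ∈ A <;> by_cases h2 : W *ᵥ x ∈ B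
      · rw [Set.indicator_of_mem (Set.mem_inter (Set.mem_preimage.mpr h1) (Set.mem_preimage.mpr h2)), hdens x]
        simp [hHdef, Set.indicator_of_mem h1, Set.indicator_of_mem h2]
      · rw [Set.indicator_of_notMem (by simp only [Set.mem_inter_iff, Set.mem_preimage]; tauto)]
        simp [hHdef, Set.indicator_of_notMem h2]
      · rw [Set.indicator_of_notMem (by simp only [Set.mem_inter_iff, Set.mem_preimage]; tauto)]
        simp [hHdef, Set.indicator_of_notMem h1]
      · rw [Set.indicator_of_notMem (by simp only [Set.mem_inter_iff, Set.mem_preimage]; tauto)]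
        simp [hHdef, Set.indicator_of_notMem h1]
    have hfae : AEMeasurable (fun u : Fin d_ρ → ℝ =>
        ENNReal.ofReal c * (A.indicator 1 u * F u)) volume :=
      (measurable_const.mul ((measurable_one.indicator hA).mul hFcont.measurable)).aemeasurable
    have hgae : AEMeasurable (fun v : Fin k → ℝ =>
        B.indicator 1 (n v) * G (n v)) volume :=
      (((measurable_one.indicator hB).comp hncont.measurable).mul
        (hGcont.measurable.comp hncont.measurable)).aemeasurable
    calc μ ((fun m => P *ᵥ m) ⁻¹' A ∩ (fun m => W *ᵥ m) ⁻¹' B)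
        = ∫⁻ x, Set.indicator ((fun m => P *ᵥ m) ⁻¹' A ∩ (fun m => W *ᵥ m) ⁻¹' B)
            (fun x => ENNReal.ofReal
              (c * Real.exp (-(1/2) * ((x - mpr) ⬝ᵥ (Γpr⁻¹ *ᵥ (x - mpr)))))) x ∂volume := by
          rw [hμ, withDensity_apply _ hSmeas, lintegral_indicator hSmeas]
      _ = ∫⁻ x, H x ∂volume := lintegral_congr hind
      _ = D * ∫⁻ x, H (T x) ∂volume := by
          conv_lhs => rw [hvol]
          rw [lintegral_smul_measure, lintegral_map hHmeas hTmeas, smul_eq_mul]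
      _ = D * ∫⁻ z, H (T (e z)) ∂volume := by
          conv_lhs => rw [← hepres.map_eq]
          rw [lintegral_map (show Measurable fun x => H (T x) from hHmeas.comp hTmeas) hepres.measurable]
      _ = D * ∫⁻ z : (Fin d_ρ → ℝ) × (Fin k → ℝ),
            (fun u => ENNReal.ofReal c * (A.indicator 1 u * F u)) z.1 *
            (fun v => B.indicator 1 (n v) * G (n v)) z.2 ∂volume := by
          congr 1
          apply lintegral_congr
          intro z
          rw [hTe, hHdef]
          simp only [hPL, hWL]
          ring
      _ = D * ((∫⁻ u, ENNReal.ofReal c * (A.indicator 1 u * F u)) *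
            (∫⁻ v, B.indicator 1 (n v) * G (n v))) := by
          rw [Measure.volume_eq_prod, lintegral_prod_mul hfae hgae]
      _ = (D * ENNReal.ofReal c) * (∫⁻ u, A.indicator 1 u * F u) *
            (∫⁻ v, B.indicator 1 (n v) * G (n v)) := by
          rw [lintegral_const_mul' _ _ ENNReal.ofReal_ne_top]
          ring
  -- conclude
  rw [ProbabilityTheory.indepFun_iff_measure_inter_preimage_eq_mul]
  intro A B hA hB
  have h1 := key A B hA hB
  have h2 : μ ((fun m => P *ᵥ m) ⁻¹' A) =
      (D * ENNReal.ofReal c) * (∫⁻ u, A.indicator 1 u * F u) *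
        (∫⁻ v, (Set.univ : Set (Fin d_m → ℝ)).indicator 1 (n v) * G (n v)) := by
    have := key A Set.univ hA MeasurableSet.univ
    simpa [Set.preimage_univ, Set.inter_univ] using this
  have h3 : μ ((fun m => W *ᵥ m) ⁻¹' B) =
      (D * ENNReal.ofReal c) * (∫⁻ u, (Set.univ : Set (Fin d_ρ → ℝ)).indicator 1 u * F u) *
        (∫⁻ v, B.indicator 1 (n v) * G (n v)) := by
    have := key Set.univ B MeasurableSet.univ hB
    simpa [Set.preimage_univ, Set.univ_inter] using this
  have h4 : (D * ENNReal.ofReal c) *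
      (∫⁻ u, (Set.univ : Set (Fin d_ρ → ℝ)).indicator 1 u * F u) *
      (∫⁻ v, (Set.univ : Set (Fin d_m → ℝ)).indicator 1 (n v) * G (n v)) = 1 := by
    have := key Set.univ Set.univ MeasurableSet.univ MeasurableSet.univ
    rw [Set.preimage_univ, Set.preimage_univ, Set.univ_inter, measure_univ] at this
    exact this.symm
  rw [h1, h2, h3]
  calc (D * ENNReal.ofReal c) * (∫⁻ u, A.indicator 1 u * F u) *
        (∫⁻ v, B.indicator 1 (n v) * G (n v))
      = ((D * ENNReal.ofReal c) * (∫⁻ u, A.indicator 1 u * F u) *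
        (∫⁻ v, B.indicator 1 (n v) * G (n v))) *
        ((D * ENNReal.ofReal c) *
          (∫⁻ u, (Set.univ : Set (Fin d_ρ → ℝ)).indicator 1 u * F u) *
          (∫⁻ v, (Set.univ : Set (Fin d_m → ℝ)).indicator 1 (n v) * G (n v))) := by
        rw [h4, mul_one]
    _ = ((D * ENNReal.ofReal c) * (∫⁻ u, A.indicator 1 u * F u) *
          (∫⁻ v, (Set.univ : Set (Fin d_m → ℝ)).indicator 1 (n v) * G (n v))) *
        ((D * ENNReal.ofReal c) *
          (∫⁻ u, (Set.univ : Set (Fin d_ρ → ℝ)).indicator 1 u * F u) *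
          (∫⁻ v, B.indicator 1 (n v) * G (n v))) := by ring
end
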